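/- The map B ↦ (1+|B|)^{p-2} B on symmetric d×d matrices is strictly monotone for p ∈ (1,2): for B₁ ≠ B₂, ((1+|B₁|)^{p-2}B₁ − (1+|B₂|)^{p-2}B₂) · (B₁ − B₂) > 0. -/
import Mathlib


noncomputable def frob {n : ℕ} (B : Matrix (Fin n) (Fin n) ℝ) : ℝ :=
  Real.sqrt (∑ i, ∑ j, (B i j) ^ 2)

lemma g_strict_mono (p : ℝ) (hp1 : 1 < p) (hp2 : p < 2) {s t : ℝ} (hs : 0 ≤ s)
    (hst : s < t) : s * (1 + s) ^ (p - 2) < t * (1 + t) ^ (p - 2) := by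
  have ht : 0 < t := lt_of_le_of_lt hs hst
  have hA : (0:ℝ) < 1 + s := by linarith
  have hB : (0:ℝ) < 1 + t := by linarith
  have hBpow : (0:ℝ) < (1 + t) ^ (p - 2) := Real.rpow_pos_of_pos hB _
  rcases eq_or_lt_of_le hs with h0 | h0
  · rw [← h0]; simpa using mul_pos ht hBpow
  have hratio : 1 < (1 + t) / (1 + s) := (one_lt_div hA).2 (by linarith)
  have hkey : ((1 + t) / (1 + s)) ^ (2 - p) < (1 + t) / (1 + s) := by
    nth_rewrite 2 [← Real.rpow_one ((1 + t) / (1 + s))]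
    exact Real.rpow_lt_rpow_of_exponent_lt hratio (by linarith)
  have h1 : s * ((1 + t) / (1 + s)) ^ (2 - p) < t := by
    calc s * ((1 + t) / (1 + s)) ^ (2 - p) < s * ((1 + t) / (1 + s)) :=
          mul_lt_mul_of_pos_left hkey h0
      _ ≤ t := by rw [← mul_div_assoc, div_le_iff₀ hA]; nlinarith
  have hrw : ((1 + t) / (1 + s)) ^ (2 - p) = (1 + t) ^ (2 - p) * (1 + s) ^ (p - 2) := by
    rw [Real.div_rpow hB.le hA.le, div_eq_mul_inv, ← Real.rpow_neg hA.le]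
    ring_nf
  rw [hrw] at h1
  have h2 : (1 + t) ^ (2 - p) * (1 + t) ^ (p - 2) = 1 := by
    rw [← Real.rpow_add hB]; norm_num
  have h3 := mul_lt_mul_of_pos_right h1 hBpow
  have heq : s * (1 + s) ^ (p - 2)
      = s * ((1 + t) ^ (2 - p) * (1 + s) ^ (p - 2)) * (1 + t) ^ (p - 2) := by
    rw [show s * ((1 + t) ^ (2 - p) * (1 + s) ^ (p - 2)) * (1 + t) ^ (p - 2)
        = s * (1 + s) ^ (p - 2) * ((1 + t) ^ (2 - p) * (1 + t) ^ (p - 2)) from by ring,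
      h2, mul_one]
  rw [heq]; exact h3

/-- The map `B ↦ (1+|B|)^{p-2} B` on symmetric matrices is strictly monotone for `p ∈ (1,2)`. -/
theorem carreau_strict_monotone {d : ℕ} (p : ℝ) (hp1 : 1 < p) (hp2 : p < 2)
    (B₁ B₂ : Matrix (Fin d) (Fin d) ℝ) (h₁ : B₁.IsSymm) (h₂ : B₂.IsSymm) (hne : B₁ ≠ B₂) :
    0 < ∑ i, ∑ j,
      ((1 + frob B₁) ^ (p - 2) * B₁ i j - (1 + frob B₂) ^ (p - 2) * B₂ i j) *
        (B₁ i j - B₂ i j) := by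
  set n₁ := frob B₁ with hn₁
  set n₂ := frob B₂ with hn₂
  set a := (1 + n₁) ^ (p - 2) with ha
  set b := (1 + n₂) ^ (p - 2) with hb
  have hs1 : (0:ℝ) ≤ ∑ i, ∑ j, (B₁ i j) ^ 2 := by positivity
  have hs2 : (0:ℝ) ≤ ∑ i, ∑ j, (B₂ i j) ^ 2 := by positivity
  have hn1nn : 0 ≤ n₁ := Real.sqrt_nonneg _
  have hn2nn : 0 ≤ n₂ := Real.sqrt_nonneg _
  have hn1sq : n₁ ^ 2 = ∑ i, ∑ j, (B₁ i j) ^ 2 := Real.sq_sqrt hs1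
  have hn2sq : n₂ ^ 2 = ∑ i, ∑ j, (B₂ i j) ^ 2 := Real.sq_sqrt hs2
  have hapos : 0 < a := Real.rpow_pos_of_pos (by linarith) _
  have hbpos : 0 < b := Real.rpow_pos_of_pos (by linarith) _
  have hCS : ∑ i, ∑ j, B₁ i j * B₂ i j ≤ n₁ * n₂ := by
    have := Real.sum_mul_le_sqrt_mul_sqrt (Finset.univ : Finset (Fin d × Fin d))
      (fun q => B₁ q.1 q.2) (fun q => B₂ q.1 q.2)
    simpa [Fintype.sum_prod_type, hn₁, hn₂, frob] using this
  have hexp : ∑ i, ∑ j, (a * B₁ i j - b * B₂ i j) * (B₁ i j - B₂ i j)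
      = a * n₁ ^ 2 + b * n₂ ^ 2 - (a + b) * ∑ i, ∑ j, B₁ i j * B₂ i j := by
    rw [hn1sq, hn2sq]
    rw [show ∑ i, ∑ j, (a * B₁ i j - b * B₂ i j) * (B₁ i j - B₂ i j)
        = ∑ i, ∑ j, (a * B₁ i j ^ 2 + b * B₂ i j ^ 2 - (a + b) * (B₁ i j * B₂ i j)) from
      Finset.sum_congr rfl fun i _ => Finset.sum_congr rfl fun j _ => by ring]
    simp only [Finset.sum_sub_distrib, Finset.sum_add_distrib, Finset.mul_sum]
  rw [show (∑ i, ∑ j, ((1 + frob B₁) ^ (p - 2) * B₁ i j - (1 + frob B₂) ^ (p - 2) * B₂ i j) *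
        (B₁ i j - B₂ i j)) = ∑ i, ∑ j, (a * B₁ i j - b * B₂ i j) * (B₁ i j - B₂ i j) from rfl,
    hexp]
  rcases eq_or_ne n₁ n₂ with hEq | hNe
  · have hab : a = b := by rw [ha, hb, hEq]
    have hdiff : 0 < ∑ i, ∑ j, (B₁ i j - B₂ i j) ^ 2 := by
      obtain ⟨i, j, hij⟩ : ∃ i j, B₁ i j ≠ B₂ i j := by
        by_contra h
        push_neg at h
        exact hne (by ext i j; exact h i j)
      have hij' : B₁ i j - B₂ i j ≠ 0 := sub_ne_zero.2 hij
      have hterm : 0 < (B₁ i j - B₂ i j) ^ 2 := by positivity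
      calc (0:ℝ) < (B₁ i j - B₂ i j) ^ 2 := hterm
        _ ≤ ∑ j', (B₁ i j' - B₂ i j') ^ 2 :=
            Finset.single_le_sum (f := fun j' => (B₁ i j' - B₂ i j') ^ 2)
              (fun k _ => sq_nonneg _) (Finset.mem_univ j)
        _ ≤ ∑ i', ∑ j', (B₁ i' j' - B₂ i' j') ^ 2 :=
            Finset.single_le_sum (f := fun i' => ∑ j', (B₁ i' j' - B₂ i' j') ^ 2)
              (fun k _ => Finset.sum_nonneg fun _ _ => sq_nonneg _) (Finset.mem_univ i)
    have hexpand : ∑ i, ∑ j, (B₁ i j - B₂ i j) ^ 2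
        = n₁ ^ 2 + n₂ ^ 2 - 2 * ∑ i, ∑ j, B₁ i j * B₂ i j := by
      rw [hn1sq, hn2sq]
      rw [show ∑ i, ∑ j, (B₁ i j - B₂ i j) ^ 2
          = ∑ i, ∑ j, (B₁ i j ^ 2 + B₂ i j ^ 2 - 2 * (B₁ i j * B₂ i j)) from
        Finset.sum_congr rfl fun i _ => Finset.sum_congr rfl fun j _ => by ring]
      simp only [Finset.sum_sub_distrib, Finset.sum_add_distrib, Finset.mul_sum]
    rw [← hab]
    nlinarith [mul_pos hapos hdiff]
  · have hmono : 0 < (n₁ - n₂) * (a * n₁ - b * n₂) := by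
      rcases lt_or_gt_of_ne hNe with h | h
      · have := g_strict_mono p hp1 hp2 hn1nn h
        rw [ha, hb]
        nlinarith [this]
      · have := g_strict_mono p hp1 hp2 hn2nn h
        rw [ha, hb]
        nlinarith [this]
    nlinarith [mul_le_mul_of_nonneg_left hCS (by positivity : (0:ℝ) ≤ a + b)]
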